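/- Let t: Σ* ⇀ Ω* be a partial function with suffix-closed domain. If a set X ⊆ dom(t) contains a linear fooling set for t, then the ⟨t⟩-growth of X grows exponentially. -/

import Mathlib

/-! Common definitions for sliding-window / visibly pushdown formalizations. -/

/-- `γ` grows polynomially: `γ(n) ∈ O(n^k)` for some `k`. -/
def GrowsPolynomially (γ : ℕ → ℕ) : Prop :=
  ∃ k C : ℕ, ∀ n : ℕ, γ n ≤ C * (n + 1) ^ k

/-- `γ` grows exponentially: there is `c > 1` with `γ(n) ≥ c^n` for infinitely many `n`. -/
def GrowsExponentially (γ : ℕ → ℕ) : Prop :=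
  ∃ c : ℝ, 1 < c ∧ ∀ m : ℕ, ∃ n : ℕ, m ≤ n ∧ c ^ n ≤ (γ n : ℝ)

/-- A set of words is suffix-closed. -/
def SuffixClosed {α : Type} (X : Set (List α)) : Prop :=
  ∀ x ∈ X, ∀ s : List α, s <:+ x → s ∈ X

/-- Domain of a partial function presented with `Option`. -/
def pdom {α β : Type} (t : List α → Option β) : Set (List α) := {x | t x ≠ none}

/-- The `t`-growth of `X`: the number of values of `t` on words of `X` of length at most `n`. -/
noncomputable def growthOf {α : Type} {Y : Type} (t : List α → Y) (X : Set (List α)) (n : ℕ) : ℕ :=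
  (t '' {x | x ∈ X ∧ x.length ≤ n}).ncard

/-- Growth of a language: number of its words of length at most `n`. -/
noncomputable def langGrowth {β : Type} (L : Set (List β)) (n : ℕ) : ℕ :=
  {y | y ∈ L ∧ y.length ≤ n}.ncard

/-- Suffix expansion of a (total or partial) function: the tuple of values on all
nonempty suffixes `a₁⋯aₙ, a₂⋯aₙ, …, aₙ` of the input. -/
def cev {α : Type} {Y : Type} (t : List α → Y) (x : List α) : List Y :=
  x.tails.dropLast.map t

/-- Image of `X` under the partial function `t`. -/
def optImage {α β : Type} (t : List α → Option β) (X : Set (List α)) : Set β :=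
  {y | ∃ x ∈ X, t x = some y}

/-- A language is bounded if it is contained in `w₁* w₂* ⋯ w_k*`. -/
def BoundedLang {β : Type} (L : Set (List β)) : Prop :=
  ∃ ws : List (List β), ∀ x ∈ L, ∃ ms : List ℕ, ms.length = ws.length ∧
    x = (List.zipWith (fun (w : List β) (m : ℕ) => (List.replicate m w).flatten) ws ms).flatten

/-- `{u,v}*`: all concatenations of copies of `u` and `v`. -/
def UVStar {α : Type} (u v : List α) : Set (List α) :=
  {w | ∃ l : List (List α), (∀ p ∈ l, p = u ∨ p = v) ∧ w = l.flatten}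

/-- `{u,v}^{≤ n}`: concatenations of at most `n` words, each equal to `u` or `v`. -/
def UVPow {α : Type} (u v : List α) (n : ℕ) : Set (List α) :=
  {w | ∃ l : List (List α), (∀ p ∈ l, p = u ∨ p = v) ∧ l.length ≤ n ∧ w = l.flatten}

/-- The set `{u₂,v₂}{u,v}* Z`. -/
def FoolingSet {α : Type} (u₂ v₂ u v : List α) (Z : Set (List α)) : Set (List α) :=
  {x | ∃ a w z, (a = u₂ ∨ a = v₂) ∧ w ∈ UVStar u v ∧ z ∈ Z ∧ x = a ++ (w ++ z)}

/-- Linear fooling scheme for a partial function `t`. -/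
def IsLinearFoolingScheme {α Y : Type} (t : List α → Option Y)
    (u₂ v₂ u v : List α) (Z : Set (List α)) : Prop :=
  u₂ <:+ u ∧ v₂ <:+ v ∧ u₂.length = v₂.length ∧
  FoolingSet u₂ v₂ u v Z ⊆ pdom t ∧
  ∃ C : ℕ, ∀ n : ℕ, ∃ z ∈ Z, z.length ≤ C * (n + 1) ∧
    ∀ w ∈ UVPow u v n, t (u₂ ++ (w ++ z)) ≠ t (v₂ ++ (w ++ z))

/-- `X` contains a linear fooling set for `t`. -/
def ContainsLinearFoolingSet {α Y : Type} (t : List α → Option Y) (X : Set (List α)) : Prop :=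
  ∃ u₂ v₂ u v Z, IsLinearFoolingScheme t u₂ v₂ u v Z ∧ FoolingSet u₂ v₂ u v Z ⊆ X

/-! ### Transducers and rational functions -/

/-- A finite-state transducer over `(α, β)` with terminal output function. -/
structure Transducer (α β : Type) where
  Q : Type
  finQ : Fintype Q
  I : Set Q
  F : Set Q
  Δ : Set (Q × List α × List β × Q)
  finΔ : Δ.Finite
  o : Q → List β

namespace Transducer

variable {α β : Type}

/-- A run from `p` to `r` with input `x` and output `y`. -/
inductive Run (A : Transducer α β) : A.Q → List α → List β → A.Q → Prop
  | nil (q : A.Q) : Run A q [] [] q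
  | cons {p q r : A.Q} {x₁ x : List α} {y₁ y : List β} :
      (p, x₁, y₁, q) ∈ A.Δ → Run A q x y r → Run A p (x₁ ++ x) (y₁ ++ y) r

/-- The transduction defined by a transducer. -/
def T (A : Transducer α β) : Set (List α × List β) :=
  {p | ∃ q₀ q y, q₀ ∈ A.I ∧ q ∈ A.F ∧ A.Run q₀ p.1 y q ∧ p.2 = y ++ A.o q}

end Transducer

/-- A partial function is rational if its graph is the transduction of some transducer. -/
def IsRationalFun {α β : Type} (t : List α → Option (List β)) : Prop :=
  ∃ A : Transducer α β, ∀ x y, t x = some y ↔ (x, y) ∈ A.T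

/-! ### Right congruences, suffix expansions, critical tuples -/

/-- A right congruence: an equivalence relation compatible with appending on the right. -/
def IsRightCongruence {α : Type} (r : List α → List α → Prop) : Prop :=
  Equivalence r ∧ ∀ x y z : List α, r x y → r (x ++ z) (y ++ z)

/-- Suffix expansion of a relation: words of the same length whose corresponding
nonempty suffixes are all related. -/
def SuffixExpansion {α : Type} (r : List α → List α → Prop) (x y : List α) : Prop :=
  x.length = y.length ∧ ∀ i < x.length, r (x.drop i) (y.drop i)

/-- Number of `r`-classes of words of length at most `n`. -/
noncomputable def classCount {α : Type} (r : List α → List α → Prop) (n : ℕ) : ℕ :=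
  Set.ncard {C : Set (List α) | ∃ x : List α, x.length ≤ n ∧ C = {y | r x y}}

/-- A relation has finite index if it has finitely many classes. -/
def FiniteIndex {α : Type} (r : List α → List α → Prop) : Prop :=
  Set.Finite {C : Set (List α) | ∃ x : List α, C = {y | r x y}}

/-- Critical tuple in a right congruence. -/
def IsCriticalTuple {α : Type} (r : List α → List α → Prop) (u₂ v₂ u v : List α) : Prop :=
  1 ≤ u₂.length ∧ u₂.length = v₂.length ∧ u₂ <:+ u ∧ v₂ <:+ v ∧
  ∀ w ∈ UVStar u v, ¬ r (u₂ ++ w) (v₂ ++ w)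

/-- The Myhill–Nerode right congruence of a language. -/
def MNrel {α : Type} (L : Set (List α)) (x y : List α) : Prop :=
  ∀ z : List α, x ++ z ∈ L ↔ y ++ z ∈ L

/-! ### Suffix distance and the canonical right congruence of a rational function -/

/-- Longest common prefix. -/
def cpre {β : Type} [DecidableEq β] : List β → List β → List β
  | a :: x, b :: y => if a = b then a :: cpre x y else []
  | _, _ => []

/-- `‖x,y‖ = |x| + |y| − 2|x ∧ y|`, where `x ∧ y` is the longest common suffix. -/
def suffDist {β : Type} [DecidableEq β] (x y : List β) : ℕ :=
  x.length + y.length - 2 * (cpre x.reverse y.reverse).length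

/-- Value of a partial function (defaulting to the empty word off the domain). -/
def pval {α β : Type} (t : List α → Option (List β)) (x : List α) : List β :=
  (t x).getD []

/-- The right congruence `R_t` of Reutenauer–Schützenberger. -/
def Rt {α β : Type} [DecidableEq β] (t : List α → Option (List β)) (u v : List α) : Prop :=
  (∀ z : List α, u ++ z ∈ pdom t ↔ v ++ z ∈ pdom t) ∧
  Set.Finite {d : ℕ | ∃ w : List α, u ++ w ∈ pdom t ∧ v ++ w ∈ pdom t ∧
      d = suffDist (pval t (u ++ w)) (pval t (v ++ w))}

/-- Two partial functions are adjacent. -/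
def Adjacent {α β : Type} [DecidableEq β] (t₁ t₂ : List α → Option (List β)) : Prop :=
  Set.Finite {d : ℕ | ∃ w : List α, w ∈ pdom t₁ ∧ w ∈ pdom t₂ ∧
      d = suffDist (pval t₁ w) (pval t₂ w)}

/-! ### Visibly pushdown automata -/

/-- Kinds of letters of a pushdown alphabet. -/
inductive VPKind : Type
  | call : VPKind
  | ret : VPKind
  | intern : VPKind
deriving DecidableEq

/-- A visibly pushdown automaton over the pushdown alphabet determined by `pa`.
The bottom-of-stack symbol `⊥` is represented implicitly by the empty stack. -/
structure VPA (α : Type) (pa : α → VPKind) where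
  Q : Type
  finQ : Fintype Q
  Γ : Type
  finΓ : Fintype Γ
  q₀ : Q
  F : Set Q
  δc : Q → α → Γ × Q
  δr : Q → α → Option Γ → Q
  δi : Q → α → Q

namespace VPA

variable {α : Type} {pa : α → VPKind}

/-- One step of the VPA on a configuration (stack with top at the head, state). -/
def step (A : VPA α pa) (c : List A.Γ × A.Q) (a : α) : List A.Γ × A.Q :=
  match pa a with
  | VPKind.call => ((A.δc c.2 a).1 :: c.1, (A.δc c.2 a).2)
  | VPKind.intern => (c.1, A.δi c.2 a)
  | VPKind.ret =>
    match c.1 with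
    | [] => ([], A.δr c.2 a none)
    | γ :: st => (st, A.δr c.2 a (some γ))

/-- Extended transition function on words. -/
def run (A : VPA α pa) (c : List A.Γ × A.Q) (w : List α) : List A.Γ × A.Q :=
  w.foldl A.step c

/-- The language accepted by a VPA (from the initial configuration `⊥q₀`). -/
def acceptsLang (A : VPA α pa) : Set (List α) :=
  {w | (A.run ([], A.q₀) w).2 ∈ A.F}

/-- Language accepted from a configuration. -/
def AccLang (A : VPA α pa) (c : List A.Γ × A.Q) : Set (List α) :=
  {w | (A.run c w).2 ∈ A.F}

/-- The reachable configurations. -/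
def rConf (A : VPA α pa) : Set (List A.Γ × A.Q) :=
  Set.range (fun w => A.run ([], A.q₀) w)

end VPA

/-- A language is a visibly pushdown language over the pushdown alphabet `pa`. -/
def IsVPL {α : Type} (pa : α → VPKind) (L : Set (List α)) : Prop :=
  ∃ A : VPA α pa, L = A.acceptsLang

/-- Well-matched words over a pushdown alphabet. -/
inductive WellMatched {α : Type} (pa : α → VPKind) : List α → Prop
  | nil : WellMatched pa []
  | intern (a : α) : pa a = VPKind.intern → WellMatched pa [a]
  | append {u v : List α} : WellMatched pa u → WellMatched pa v → WellMatched pa (u ++ v)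
  | wrap {w : List α} {a b : α} : WellMatched pa w → pa a = VPKind.call → pa b = VPKind.ret →
      WellMatched pa (a :: (w ++ [b]))

/-- Descending words: concatenations of well-matched words and return letters. -/
def Descending {α : Type} (pa : α → VPKind) (w : List α) : Prop :=
  ∃ l : List (List α),
    (∀ p ∈ l, WellMatched pa p ∨ ∃ b : α, pa b = VPKind.ret ∧ p = [b]) ∧ w = l.flatten

/-- Length-lexicographic order on configurations `⊥αq` (stacks compared bottom-first). -/
def ConfLe {Q Γ : Type} (ltQ : LinearOrder Q) (ltΓ : LinearOrder Γ)
    (c d : List Γ × Q) : Prop :=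
  c.1.length < d.1.length ∨
    (c.1.length = d.1.length ∧
      (List.Lex ltΓ.lt c.1.reverse d.1.reverse ∨ (c.1 = d.1 ∧ ltQ.le c.2 d.2)))

/-- `rep` chooses from each equivalence class of reachable configurations the
length-lexicographically least representative. -/
def IsRepFun {α : Type} {pa : α → VPKind} (A : VPA α pa)
    (ltQ : LinearOrder A.Q) (ltΓ : LinearOrder A.Γ)
    (rep : List A.Γ × A.Q → List A.Γ × A.Q) : Prop :=
  ∀ c ∈ A.rConf, rep c ∈ A.rConf ∧ A.AccLang (rep c) = A.AccLang c ∧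
    ∀ c' ∈ A.rConf, A.AccLang c' = A.AccLang c → ConfLe ltQ ltΓ (rep c) c'

/-- `ν_A(w)`: the representative of the configuration reached on `w`. -/
def nuA {α : Type} {pa : α → VPKind} (A : VPA α pa)
    (rep : List A.Γ × A.Q → List A.Γ × A.Q) (w : List α) : List A.Γ × A.Q :=
  rep (A.run ([], A.q₀) w)

/-- `σ₀(w)`: the states representing the Myhill–Nerode classes of the nonempty suffixes. -/
def sigma0 {α : Type} {pa : α → VPKind} (A : VPA α pa)
    (rep : List A.Γ × A.Q → List A.Γ × A.Q) (w : List α) : List A.Q :=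
  w.tails.dropLast.map fun s => (nuA A rep s).2

/-- `φ(w)`: the state transformation of a well-matched word. -/
def phiVPA {α : Type} {pa : α → VPKind} (A : VPA α pa) (w : List α) : A.Q → A.Q :=
  fun p => (A.run ([], p) w).2

/-- `σ₁(w) = φ(w) q₂ ⋯ qₙ`, a word over the alphabet `Q^Q ∪ Q`. -/
def sigma1 {α : Type} {pa : α → VPKind} (A : VPA α pa)
    (rep : List A.Γ × A.Q → List A.Γ × A.Q) (w : List α) : List ((A.Q → A.Q) ⊕ A.Q) :=
  Sum.inl (phiVPA A w) :: ((sigma0 A rep w).tail.map Sum.inr)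

/-! ### Real-time right transducers -/

/-- A real-time right transducer (reads its input from right to left). -/
structure RightTransducer (α β : Type) where
  Q : Type
  finQ : Fintype Q
  F : Set Q
  I : Set Q
  Δ : Set (Q × α × List β × Q)
  finΔ : Δ.Finite
  o : Q → List β

namespace RightTransducer

variable {α β : Type}

/-- Input word of a sequence of transitions. -/
def inputOf {Q : Type} (ts : List (Q × α × List β × Q)) : List α :=
  ts.map fun tr => tr.2.1

/-- Output word of a sequence of transitions. -/
def outputOf {Q : Type} (ts : List (Q × α × List β × Q)) : List β :=
  (ts.map fun tr => tr.2.2.1).flatten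

/-- `IsRunFrom A q ts p`: `ts` is a run on its input from the (rightmost) state `p`
to the (leftmost) state `q`; the transitions are listed left to right. -/
def IsRunFrom (A : RightTransducer α β) : A.Q → List (A.Q × α × List β × A.Q) → A.Q → Prop
  | q, [], p => q = p
  | q, tr :: ts, p => tr ∈ A.Δ ∧ tr.1 = q ∧ IsRunFrom A tr.2.2.2 ts p

/-- There is a run on `w` from `p` (right) to `q` (left). -/
def RunOn (A : RightTransducer α β) (q : A.Q) (w : List α) (p : A.Q) : Prop :=
  ∃ ts, A.IsRunFrom q ts p ∧ inputOf ts = w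

/-- `q ⪯ p`: there is a run from `p` to `q`. -/
def Below (A : RightTransducer α β) (q p : A.Q) : Prop :=
  ∃ w, A.RunOn q w p

/-- The partial function defined by a right transducer. -/
def Defines (A : RightTransducer α β) (t : List α → Option (List β)) : Prop :=
  ∀ x y, t x = some y ↔ ∃ p q ts, p ∈ A.F ∧ q ∈ A.I ∧ A.IsRunFrom p ts q ∧
    inputOf ts = x ∧ y = A.o p ++ outputOf ts

/-- Every state occurs on some initial accepting run. -/
def Trim (A : RightTransducer α β) : Prop :=
  ∀ s : A.Q, ∃ p q ts₁ ts₂, p ∈ A.F ∧ q ∈ A.I ∧ A.IsRunFrom p ts₁ s ∧ A.IsRunFrom s ts₂ q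

/-- Every input word has at most one initial accepting run. -/
def Unambiguous (A : RightTransducer α β) : Prop :=
  ∀ p p' q q' ts ts', p ∈ A.F → p' ∈ A.F → q ∈ A.I → q' ∈ A.I →
    A.IsRunFrom p ts q → A.IsRunFrom p' ts' q' → inputOf ts = inputOf ts' →
    p = p' ∧ ts = ts'

/-- `w` is guarded by `p`: some run on `w` from `p` stays in the SCC of `p`. -/
def Guarded (A : RightTransducer α β) (p : A.Q) (w : List α) : Prop :=
  ∃ q', A.RunOn q' w p ∧ A.Below p q'

/-- The transducer is well-behaved: the terminal outputs of guarded accepting runs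
from the same state on words of equal length coincide. -/
def WellBehaved (A : RightTransducer α β) : Prop :=
  ∀ (p q q' : A.Q) ts ts', q ∈ A.F → q' ∈ A.F →
    A.IsRunFrom q ts p → A.IsRunFrom q' ts' p →
    A.Guarded p (inputOf ts) → A.Guarded p (inputOf ts') →
    (inputOf ts).length = (inputOf ts').length →
    A.o q ++ outputOf ts = A.o q' ++ outputOf ts'

end RightTransducer

/-! ### The Parikh-like map Ψ -/

/-- `Ψ(w)`: each letter of `w` paired with its position counted from the right (1-based). -/
def Psi {α : Type} (w : List α) : Set (α × ℕ) :=
  {p | ∃ i : ℕ, w[i]? = some p.1 ∧ p.2 = w.length - i}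

/-- `Ψ(L) = ⋃_{w ∈ L} Ψ(w)`. -/
def PsiL {α : Type} (L : Set (List α)) : Set (α × ℕ) :=
  ⋃ w ∈ L, Psi w

namespace S3aux

variable {α β : Type}

def blk (u v : List α) (b : Bool) : List α := if b then u else v

def J (u v : List α) (s : List Bool) : List α := (s.map (blk u v)).flatten

lemma J_nil (u v : List α) : J u v [] = [] := rfl

lemma J_concat (u v : List α) (s : List Bool) (b : Bool) :
    J u v (s ++ [b]) = J u v s ++ blk u v b := by
  simp [J]

lemma length_le_J (u v : List α) (hu : u ≠ []) (hv : v ≠ []) (s : List Bool) :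
    s.length ≤ (J u v s).length := by
  induction s with
  | nil => simp [J]
  | cons b s ih =>
    have hb : 1 ≤ (blk u v b).length := by
      cases b
      · simpa [blk] using Nat.one_le_iff_ne_zero.mpr (List.length_pos_iff.mpr hv).ne'
      · simpa [blk] using Nat.one_le_iff_ne_zero.mpr (List.length_pos_iff.mpr hu).ne'
    have : J u v (b :: s) = blk u v b ++ J u v s := by simp [J]
    rw [this, List.length_append]
    simp only [List.length_cons]
    omega

lemma J_length_le (u v : List α) (M : ℕ) (hu : u.length ≤ M) (hv : v.length ≤ M) (s : List Bool) :
    (J u v s).length ≤ s.length * M := by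
  induction s with
  | nil => simp [J]
  | cons b s ih =>
    have hb : (blk u v b).length ≤ M := by cases b <;> simpa [blk]
    have : J u v (b :: s) = blk u v b ++ J u v s := by simp [J]
    rw [this, List.length_append]
    simp only [List.length_cons]
    calc (blk u v b).length + (J u v s).length ≤ M + s.length * M := Nat.add_le_add hb ih
      _ = (s.length + 1) * M := by ring

lemma J_mem_UVStar (u v : List α) (s : List Bool) : J u v s ∈ UVStar u v := by
  refine ⟨s.map (blk u v), ?_, rfl⟩
  intro p hp
  simp only [List.mem_map] at hp
  obtain ⟨b, _, rfl⟩ := hp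
  cases b
  · exact Or.inr (by simp [blk])
  · exact Or.inl (by simp [blk])

lemma nil_mem_UVPow (u v : List α) (n : ℕ) : [] ∈ UVPow u v n :=
  ⟨[], by simp, by simp, by simp⟩

lemma concat_mem_UVPow (u v : List α) (n : ℕ) (w : List α) (hw : w ∈ UVPow u v n) (b : Bool) :
    w ++ blk u v b ∈ UVPow u v (n + 1) := by
  obtain ⟨l, hl, hlen, rfl⟩ := hw
  refine ⟨l ++ [blk u v b], ?_, by simpa using hlen, by simp⟩
  intro p hp
  rcases List.mem_append.mp hp with h | h
  · exact hl p h
  · simp only [List.mem_singleton] at h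
    subst h
    cases b
    · exact Or.inr (by simp [blk])
    · exact Or.inl (by simp [blk])

/-- Key injectivity lemma. -/
lemma key (t : List α → Option (List β)) (u₂ v₂ u v pu pv : List α)
    (hu : pu ++ u₂ = u) (hv : pv ++ v₂ = v) (hlen2 : u₂.length = v₂.length)
    (hne2 : u₂ ≠ []) :
    ∀ m (z : List α),
      (∀ w ∈ UVPow u v m, t (u₂ ++ (w ++ z)) ≠ t (v₂ ++ (w ++ z))) →
      ∀ s s' : List Bool, s.length ≤ m → s'.length ≤ m →
      (J u v s).length = (J u v s').length →
      (∀ i < (u₂ ++ (J u v s ++ z)).length,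
        t ((u₂ ++ (J u v s ++ z)).drop i) = t ((u₂ ++ (J u v s' ++ z)).drop i)) →
      s = s' := by
  have hv2ne : v₂ ≠ [] := by
    intro h
    exact hne2 (List.eq_nil_of_length_eq_zero (by rw [hlen2, h]; rfl))
  have hune : u ≠ [] := by
    intro h
    exact hne2 (List.append_eq_nil_iff.mp (hu.trans h)).2
  have hvne : v ≠ [] := by
    intro h
    exact hv2ne (List.append_eq_nil_iff.mp (hv.trans h)).2
  intro m
  induction m with
  | zero =>
    intro z hz s s' hs hs' _ _
    rw [List.length_eq_zero_iff.mp (Nat.le_zero.mp hs), List.length_eq_zero_iff.mp (Nat.le_zero.mp hs')]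
  | succ m ih =>
    intro z hz s s' hs hs' hJlen hdrop
    rcases List.eq_nil_or_concat s with rfl | ⟨s₁, b, rfl⟩
    · -- s = [] : J s' also empty
      have h0 : (J u v s').length = 0 := by simpa [J_nil] using hJlen.symm
      have := length_le_J u v hune hvne s'
      exact (List.eq_nil_of_length_eq_zero (by omega)).symm
    simp only [List.concat_eq_append] at hs hJlen hdrop ⊢
    have hJs : 1 ≤ (J u v (s₁ ++ [b])).length := by
      have h1 := length_le_J u v hune hvne (s₁ ++ [b])
      have h2 : 1 ≤ (s₁ ++ [b]).length := by simp
      omega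
    rcases List.eq_nil_or_concat s' with rfl | ⟨s₁', b', rfl⟩
    · exfalso
      rw [J_nil] at hJlen
      simp only [List.length_nil] at hJlen
      omega
    simp only [List.concat_eq_append] at hs' hJlen hdrop ⊢
    by_cases hbb : b = b'
    · -- same last block: recurse
      subst hbb
      have hfool' : ∀ w ∈ UVPow u v m,
          t (u₂ ++ (w ++ (blk u v b ++ z))) ≠ t (v₂ ++ (w ++ (blk u v b ++ z))) := by
        intro w hw
        have := hz (w ++ blk u v b) (concat_mem_UVPow u v m w hw b)
        simpa using this
      have hs₁ : s₁.length ≤ m := by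
        simp only [List.length_append, List.length_cons, List.length_nil] at hs; omega
      have hs₁' : s₁'.length ≤ m := by
        simp only [List.length_append, List.length_cons, List.length_nil] at hs'; omega
      have hJlen' : (J u v s₁).length = (J u v s₁').length := by
        rw [J_concat, J_concat, List.length_append, List.length_append] at hJlen
        omega
      have h1 : u₂ ++ (J u v s₁ ++ (blk u v b ++ z)) = u₂ ++ (J u v (s₁ ++ [b]) ++ z) := by
        rw [J_concat]; simp
      have h2 : u₂ ++ (J u v s₁' ++ (blk u v b ++ z)) = u₂ ++ (J u v (s₁' ++ [b]) ++ z) := by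
        rw [J_concat]; simp
      have hdrop' : ∀ i < (u₂ ++ (J u v s₁ ++ (blk u v b ++ z))).length,
          t ((u₂ ++ (J u v s₁ ++ (blk u v b ++ z))).drop i)
            = t ((u₂ ++ (J u v s₁' ++ (blk u v b ++ z))).drop i) := by
        intro i hi
        rw [h1, h2]
        exact hdrop i (by rw [← h1]; exact hi)
      rw [ih (blk u v b ++ z) hfool' s₁ s₁' hs₁ hs₁' hJlen' hdrop']
    · -- different last blocks: contradiction
      exfalso
      have hz0 := hz [] (nil_mem_UVPow u v (m+1))
      simp only [List.nil_append] at hz0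
      have hJb : ∀ (s₀ : List Bool) (c : Bool), ∃ p : List α,
          (p ++ if c then u₂ else v₂) = blk u v c ∧
          u₂ ++ (J u v (s₀ ++ [c]) ++ z)
            = (u₂ ++ J u v s₀ ++ p) ++ ((if c then u₂ else v₂) ++ z) := by
        intro s₀ c
        cases c
        · exact ⟨pv, by simpa [blk] using hv, by rw [J_concat]; simp [blk, ← hv]⟩
        · exact ⟨pu, by simpa [blk] using hu, by rw [J_concat]; simp [blk, ← hu]⟩
      obtain ⟨p, hp, hx⟩ := hJb s₁ b
      obtain ⟨p', hp', hx'⟩ := hJb s₁' b'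
      have halen : (if b then u₂ else v₂).length = (if b' then u₂ else v₂).length := by
        cases b <;> cases b' <;> simp [hlen2]
      have e1 : (J u v (s₁ ++ [b])).length
          = (J u v s₁).length + p.length + (if b then u₂ else v₂).length := by
        rw [J_concat, ← hp]
        simp only [List.length_append]
        omega
      have e2 : (J u v (s₁' ++ [b'])).length
          = (J u v s₁').length + p'.length + (if b' then u₂ else v₂).length := by
        rw [J_concat, ← hp']
        simp only [List.length_append]
        omega
      have hilen : (u₂ ++ J u v s₁ ++ p).length = (u₂ ++ J u v s₁' ++ p').length := by
        simp only [List.length_append]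
        omega
      have hapos : 1 ≤ (if b then u₂ else v₂).length := by
        cases b
        · simpa using Nat.one_le_iff_ne_zero.mpr (List.length_pos_iff.mpr hv2ne).ne'
        · simpa using Nat.one_le_iff_ne_zero.mpr (List.length_pos_iff.mpr hne2).ne'
      have hi1 : (u₂ ++ J u v s₁ ++ p).length < (u₂ ++ (J u v (s₁ ++ [b]) ++ z)).length := by
        rw [hx]
        simp only [List.length_append]
        omega
      have hd := hdrop (u₂ ++ J u v s₁ ++ p).length hi1
      rw [hx, hx', List.drop_left] at hd
      rw [hilen, List.drop_left] at hd
      cases b <;> cases b' <;> simp only [if_true, if_false, Bool.false_eq_true] at hd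
      · exact hbb rfl
      · exact hz0 hd.symm
      · exact hz0 hd
      · exact hbb rfl


lemma cev_length' {α Y : Type} (t : List α → Y) (x : List α) : (cev t x).length = x.length := by
  simp [cev]

lemma cev_getElem' {α Y : Type} (t : List α → Y) (x : List α) (i : ℕ)
    (h : i < (cev t x).length) : (cev t x)[i] = t (x.drop i) := by
  simp [cev, List.getElem_dropLast]

end S3aux

/-- if a partial function `t` has suffix-closed domain and
`X ⊆ dom t` contains a linear fooling set for `t`, then the `⟨t⟩`-growth of `X`
is exponential. -/
theorem statement3 {α β : Type} [Fintype α] [Fintype β]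
    (t : List α → Option (List β)) (hsc : SuffixClosed (pdom t))
    (X : Set (List α)) (hX : X ⊆ pdom t)
    (hfool : ContainsLinearFoolingSet t X) :
    GrowsExponentially (growthOf (cev t) X) := by
  classical
  obtain ⟨u₂, v₂, u, v, Z, ⟨hsu, hsv, hl2, hdom, C, hC⟩, hsubX⟩ := hfool
  obtain ⟨pu, hu⟩ := hsu
  obtain ⟨pv, hv⟩ := hsv
  -- u₂ is nonempty
  have hne2 : u₂ ≠ [] := by
    obtain ⟨z₀, _, _, hz₀⟩ := hC 0
    have hne := hz₀ [] (S3aux.nil_mem_UVPow u v 0)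
    intro h
    apply hne
    have hv2 : v₂ = [] := List.eq_nil_of_length_eq_zero (by rw [← hl2, h]; rfl)
    rw [h, hv2]
  set M := max u.length v.length with hM
  set K := 2*M + 2*C + 2 with hK
  have hKpos : 0 < K := by omega
  refine ⟨(2:ℝ) ^ ((K:ℝ)⁻¹), ?_, ?_⟩
  · rw [Real.one_lt_rpow_iff_of_pos (by norm_num)]
    exact Or.inl ⟨one_lt_two, inv_pos.mpr (by exact_mod_cast hKpos)⟩
  intro m
  set n := m + 1 with hn
  refine ⟨n * K, by nlinarith, ?_⟩
  -- count: 2^n ≤ growthOf (cev t) X (n*K)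
  obtain ⟨z, hzZ, hzlen, hzf⟩ := hC n
  set N := n * K with hN
  set T := cev t '' {x | x ∈ X ∧ x.length ≤ N} with hT
  have hTfin : T.Finite := by
    apply Set.Finite.image
    exact (List.finite_length_le α N).subset (fun x hx => hx.2)
  -- the words
  set wd : (Fin n → Bool) → List α :=
    fun σ => u₂ ++ (S3aux.J u v (List.ofFn σ) ++ z) with hwd
  have hmem : ∀ σ : Fin n → Bool, wd σ ∈ {x | x ∈ X ∧ x.length ≤ N} := by
    intro σ
    constructor
    · exact hsubX ⟨u₂, S3aux.J u v (List.ofFn σ), z, Or.inl rfl,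
        S3aux.J_mem_UVStar u v (List.ofFn σ), hzZ, rfl⟩
    · have h1 : (S3aux.J u v (List.ofFn σ)).length ≤ n * M :=
        le_trans (S3aux.J_length_le u v M (le_max_left _ _) (le_max_right _ _) _)
          (by simp [hn])
      have h2 : u₂.length ≤ M := le_trans (by
          have : u₂.length ≤ u.length := by rw [← hu]; simp
          exact this) (le_max_left _ _)
      have h3 : (wd σ).length = u₂.length + (S3aux.J u v (List.ofFn σ)).length + z.length := by
        simp only [hwd, List.length_append]
        omega
      rw [h3]
      have hbound : M + n*M + C*(n+1) ≤ n*K := by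
        rw [hK]; nlinarith [hn ▸ (Nat.le_refl n)]
      omega
  have hinj : Function.Injective (fun σ : Fin n → Bool => cev t (wd σ)) := by
    intro σ σ' heq
    simp only at heq
    have hlencev : (wd σ).length = (wd σ').length := by
      rw [← S3aux.cev_length' t (wd σ), ← S3aux.cev_length' t (wd σ'), heq]
    have hJl : (S3aux.J u v (List.ofFn σ)).length = (S3aux.J u v (List.ofFn σ')).length := by
      have := hlencev
      simp only [hwd, List.length_append] at this
      omega
    have hdrop : ∀ i < (wd σ).length, t ((wd σ).drop i) = t ((wd σ').drop i) := by
      intro i hi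
      have hi1 : i < (cev t (wd σ)).length := by rw [S3aux.cev_length']; exact hi
      have hi2 : i < (cev t (wd σ')).length := by rw [S3aux.cev_length', ← hlencev]; exact hi
      rw [← S3aux.cev_getElem' t (wd σ) i hi1, ← S3aux.cev_getElem' t (wd σ') i hi2]
      simp only [heq]
    have key := S3aux.key t u₂ v₂ u v pu pv hu hv hl2 hne2 n z hzf
      (List.ofFn σ) (List.ofFn σ') (by simp [hn]) (by simp [hn]) hJl hdrop
    exact List.ofFn_injective key
  -- cardinality
  have hcards : 2 ^ n ≤ T.ncard := by
    have this := Fintype.card_le_of_injective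
      (fun σ : Fin n → Bool => (⟨cev t (wd σ), by
        rw [Set.Finite.mem_toFinset]
        exact ⟨wd σ, hmem σ, rfl⟩⟩ : {x // x ∈ hTfin.toFinset}))
      (fun σ σ' h => hinj (by simpa using congrArg Subtype.val h))
    rw [Fintype.card_coe] at this
    calc 2 ^ n = Fintype.card (Fin n → Bool) := by simp
      _ ≤ hTfin.toFinset.card := this
      _ = T.ncard := (Set.ncard_eq_toFinset_card T hTfin).symm
  have hgrowth : growthOf (cev t) X N = T.ncard := rfl
  -- now the real-number inequality
  have hpow : ((2:ℝ) ^ ((K:ℝ)⁻¹)) ^ (n*K) = ((2^n : ℕ) : ℝ) := by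
    rw [← Real.rpow_natCast ((2:ℝ) ^ ((K:ℝ)⁻¹)) (n*K), ← Real.rpow_mul (by norm_num)]
    rw [show ((K:ℝ)⁻¹ * (↑(n*K)) : ℝ) = (n:ℝ) by push_cast; field_simp]
    rw [Real.rpow_natCast]
    push_cast; ring
  rw [hpow]
  have hfinal : (2:ℕ)^n ≤ growthOf (cev t) X (n*K) := le_of_le_of_eq hcards hgrowth.symm
  exact_mod_cast hfinal
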